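/- arXiv:1506.06480 — 2 statements merged into one kernel-verified Lean document; each statement's English description precedes it below -/
import Mathlib

section
/- Let (R, m) be a two-dimensional regular local ring and Q = (a, b) a parameter ideal with Q ⊆ m^2. Then the socle ideal I = Q : m satisfies μ_R(I) = 3, i.e., I is minimally generated by three elements. -/
open IsLocalRing

theorem aux_artinian_vs (R : Type*) [CommRing R] [IsLocalRing R]
    (M : Type*) [AddCommGroup M] [Module R M] [Module.Finite R M]
    (h : (maximalIdeal R) • (⊤ : Submodule R M) = ⊥) : IsArtinian R M := by
  have htor : Module.IsTorsionBySet R M (maximalIdeal R) := by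
    intro x r
    have : (r : R) • x ∈ (maximalIdeal R) • (⊤ : Submodule R M) :=
      Submodule.smul_mem_smul r.2 Submodule.mem_top
    rw [h] at this; simpa using this
  letI : Module (R ⧸ maximalIdeal R) M := htor.module
  haveI : IsScalarTower R (R ⧸ maximalIdeal R) M := htor.isScalarTower
  haveI : Module.Finite (R ⧸ maximalIdeal R) M :=
    Module.Finite.of_restrictScalars_finite R _ _
  letI : Field (R ⧸ maximalIdeal R) := Ideal.Quotient.field _
  haveI hart : IsArtinian (R ⧸ maximalIdeal R) M := isArtinian_of_fg_of_artinian'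
  let g : Submodule R M → Submodule (R ⧸ maximalIdeal R) M := fun N =>
    { carrier := N
      add_mem' := fun ha hb => N.add_mem ha hb
      zero_mem' := N.zero_mem
      smul_mem' := by
        intro c x hx
        obtain ⟨r, rfl⟩ := Ideal.Quotient.mk_surjective c
        have heq : (Ideal.Quotient.mk (maximalIdeal R) r) • x = r • x := by
          rw [← algebraMap_smul (R := R) (R ⧸ maximalIdeal R) r x]; rfl
        rw [heq]; exact N.smul_mem r hx }
  have hg : StrictMono g := by
    intro N N' hNN'
    refine lt_of_le_of_ne (fun x hx => hNN'.le hx) (fun hle => ?_)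
    have : N = N' := by
      ext z; constructor
      · intro hz; exact hNN'.le hz
      · intro hz
        have : z ∈ g N' := hz
        rw [← hle] at this; exact this
    exact absurd this (ne_of_lt hNN')
  rw [isArtinian_iff] at hart ⊢
  exact Subrelation.wf (fun {a b} hab => hg hab) (InvImage.wf g hart)

theorem aux_artinian_pow (R : Type*) [CommRing R] [IsLocalRing R] [IsNoetherianRing R]
    (n : ℕ) (M : Type*) [AddCommGroup M] [Module R M] [Module.Finite R M]
    (h : (maximalIdeal R)^n • (⊤ : Submodule R M) = ⊥) : IsArtinian R M := by
  induction n generalizing M with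
  | zero =>
    rw [pow_zero, Ideal.one_eq_top, Submodule.top_smul] at h
    haveI : Subsingleton M := by
      constructor
      intro u v
      have hu : u ∈ (⊤ : Submodule R M) := Submodule.mem_top
      have hv : v ∈ (⊤ : Submodule R M) := Submodule.mem_top
      rw [h, Submodule.mem_bot] at hu hv
      rw [hu, hv]
    infer_instance
  | succ n ih =>
    set N : Submodule R M := (maximalIdeal R)^n • ⊤ with hN
    have hmN : maximalIdeal R • N = ⊥ := by
      rw [hN, ← Submodule.smul_assoc, Ideal.smul_eq_mul, ← pow_succ'] at *
      exact h
    have hNfg : N.FG := by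
      haveI : IsNoetherian R M := isNoetherian_of_isNoetherianRing_of_finite R M
      exact IsNoetherian.noetherian N
    haveI : Module.Finite R N := Module.Finite.iff_fg.mpr hNfg
    haveI hart1 : IsArtinian R N := by
      apply aux_artinian_vs R
      rw [eq_bot_iff]
      rw [Submodule.smul_le]
      intro r hr nn hnn
      have : r • (nn : M) ∈ maximalIdeal R • N := Submodule.smul_mem_smul hr nn.2
      rw [hmN, Submodule.mem_bot] at this
      rw [Submodule.mem_bot]
      exact Subtype.ext (by simpa using this)
    haveI hart2 : IsArtinian R (M ⧸ N) := by
      apply ih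
      have : ((maximalIdeal R)^n • (⊤ : Submodule R M)).map N.mkQ = ⊥ := by
        rw [← hN]
        refine le_antisymm (Submodule.map_le_iff_le_comap.mpr ?_) bot_le
        rw [Submodule.comap_bot, Submodule.ker_mkQ]
      rw [Submodule.map_smul''] at this
      rwa [Submodule.map_top, Submodule.range_mkQ] at this
    exact isArtinian_of_range_eq_ker N.subtype N.mkQ
      (by rw [Submodule.range_subtype, Submodule.ker_mkQ])


theorem aux_no_pow_le_span (R : Type*) [CommRing R] [IsDomain R] [IsNoetherianRing R]
    [IsLocalRing R] (hdim : ringKrullDim R = 2) (z : R) (hz : z ∈ maximalIdeal R)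
    (n : ℕ) (hn : maximalIdeal R ^ n ≤ Ideal.span {z}) : False := by
  -- n must be positive
  rcases n with _ | n
  · rw [pow_zero, Ideal.one_eq_top, top_le_iff] at hn
    exact hz (Ideal.span_singleton_eq_top.mp hn)
  -- extract a chain of primes
  have hchain : ∃ q0 q1 q2 : PrimeSpectrum R, q0 < q1 ∧ q1 < q2 := by
    by_contra hcon
    push_neg at hcon
    have hle : ringKrullDim R ≤ 1 := by
      rw [ringKrullDim, Order.krullDim_eq_iSup_length]
      have hlen : ∀ p : LTSeries (PrimeSpectrum R), p.length ≤ 1 := by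
        intro p
        by_contra hlen
        push_neg at hlen
        have h2 : 2 ≤ p.length := hlen
        have l01 : p ⟨0, by omega⟩ < p ⟨1, by omega⟩ := p.strictMono (Fin.mk_lt_mk.mpr (by omega))
        have l12 : p ⟨1, by omega⟩ < p ⟨2, by omega⟩ := p.strictMono (Fin.mk_lt_mk.mpr (by omega))
        exact hcon _ _ _ l01 l12
      have hsup : (⨆ p : LTSeries (PrimeSpectrum R), (p.length : ℕ∞)) ≤ (1 : ℕ∞) :=
        iSup_le fun p => by exact_mod_cast hlen p
      have := WithBot.coe_le_coe.mpr hsup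
      simpa using this
    rw [hdim] at hle
    norm_num at hle
  obtain ⟨q0, q1, q2, h01, h12⟩ := hchain
  set P : Ideal R := q1.asIdeal with hP
  haveI hPp : P.IsPrime := q1.2
  -- z not in P
  have hzP : z ∉ P := by
    intro hzmem
    have hmP : maximalIdeal R ≤ P := by
      have : maximalIdeal R ^ (n+1) ≤ P := hn.trans (by
        rwa [Ideal.span_singleton_le_iff_mem])
      exact (Ideal.IsPrime.pow_le_iff (by omega)).mp this
    have hq2 : q2.asIdeal ≤ maximalIdeal R := le_maximalIdeal q2.2.ne_top
    have : q2.asIdeal ≤ P := hq2.trans hmP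
    exact absurd (lt_of_lt_of_le h12 this) (lt_irrefl _)
  -- a nonzero element of P
  obtain ⟨t, htP, htq0⟩ : ∃ t, t ∈ P ∧ t ∉ q0.asIdeal := SetLike.exists_of_lt h01
  have ht0 : t ≠ 0 := fun h => htq0 (h ▸ q0.asIdeal.zero_mem)
  -- the localization
  set A := Localization.AtPrime P with hA
  haveI : IsNoetherianRing A := IsLocalization.isNoetherianRing P.primeCompl A ‹_›
  set φ := algebraMap R A with hφ
  have hzc : z ∈ P.primeCompl := hzP
  have hzu : IsUnit (φ z) := IsLocalization.map_units A ⟨z, hzc⟩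
  set Pk : ℕ → Ideal R := fun k => Ideal.comap φ (Ideal.map φ (P^k)) with hPk
  have hdesc : ∀ k, Pk (k+1) ≤ Pk k := fun k =>
    Ideal.comap_mono (Ideal.map_mono (Ideal.pow_le_pow_right (by omega)))
  -- Artinian quotient
  haveI : Module.Finite R (R ⧸ Ideal.span {z}) :=
    Module.Finite.of_surjective (Ideal.span {z}).mkQ (Submodule.mkQ_surjective _)
  haveI hart : IsArtinian R (R ⧸ Ideal.span {z}) := by
    apply aux_artinian_pow R (n+1)
    have hmap : ((maximalIdeal R)^(n+1) • (⊤ : Submodule R R)).map (Ideal.span {z}).mkQ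
        = (maximalIdeal R)^(n+1) • (⊤ : Submodule R (R ⧸ Ideal.span {z})) := by
      rw [Submodule.map_smul'', Submodule.map_top, Submodule.range_mkQ]
    rw [← hmap]
    refine le_antisymm (Submodule.map_le_iff_le_comap.mpr ?_) bot_le
    rw [Submodule.comap_bot, Submodule.ker_mkQ]
    calc (maximalIdeal R)^(n+1) • (⊤ : Submodule R R)
        = (maximalIdeal R)^(n+1) * ⊤ := Ideal.smul_eq_mul _ _
      _ = (maximalIdeal R)^(n+1) := by rw [Ideal.mul_top]
      _ ≤ Ideal.span {z} := hn
  -- stabilization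
  set J : ℕ → Ideal R := fun k => Pk k ⊔ Ideal.span {z} with hJ
  set F : ℕ → Submodule R (R ⧸ Ideal.span {z}) := fun k => Submodule.map (Ideal.span {z}).mkQ (J k)
    with hF
  obtain ⟨Mv, hMvmem, hmin⟩ := IsArtinian.set_has_minimal (Set.range F) ⟨F 0, 0, rfl⟩
  obtain ⟨k0, rfl⟩ := hMvmem
  have hFle : F (k0+1) ≤ F k0 := Submodule.map_mono (sup_le_sup_right (hdesc k0) _)
  have hFeq : F (k0+1) = F k0 := by
    by_contra hne
    exact hmin (F (k0+1)) ⟨k0+1, rfl⟩ (lt_of_le_of_ne hFle hne)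
  have hJeq : J k0 = J (k0+1) := by
    have e1 : Ideal.span {z} ⊔ J (k0+1) = Ideal.span {z} ⊔ J k0 := by
      have e0 := congrArg (Submodule.comap (Ideal.span {z}).mkQ) hFeq
      simp only [hF] at e0
      rwa [Submodule.comap_map_mkQ, Submodule.comap_map_mkQ] at e0
    have e2 : ∀ k, Ideal.span {z} ⊔ J k = J k := fun k => by
      rw [hJ]; rw [sup_comm]; rw [sup_assoc]; simp
    rw [e2, e2] at e1; exact e1.symm
  -- descend to Pk
  have hPkle : Pk k0 ≤ Pk (k0+1) ⊔ (maximalIdeal R) • (Pk k0) := by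
    intro w hw
    have hwJ : w ∈ J (k0+1) := by
      rw [← hJeq]; exact le_sup_left (α := Ideal R) hw
    rw [hJ] at hwJ
    obtain ⟨w', hw', v, hv, rfl⟩ := Submodule.mem_sup.mp hwJ
    obtain ⟨c, rfl⟩ := Ideal.mem_span_singleton'.mp hv
    have hcz : c * z ∈ Pk k0 := by
      have : w' ∈ Pk k0 := hdesc k0 hw'
      have := (Pk k0).sub_mem hw this
      simpa using this
    have hc : c ∈ Pk k0 := by
      have hcz' : φ c * φ z ∈ Ideal.map φ (P^k0) := by
        have hmem : φ (c*z) ∈ Ideal.map φ (P^k0) := hcz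
        rwa [map_mul] at hmem
      have h2 := Ideal.mul_mem_right (↑hzu.unit⁻¹) _ hcz'
      rw [mul_assoc, hzu.mul_val_inv, mul_one] at h2
      exact h2
    refine Submodule.add_mem _ (le_sup_left (α := Ideal R) hw') (le_sup_right (α := Ideal R) ?_)
    have : z • c ∈ (maximalIdeal R) • (Pk k0) := Submodule.smul_mem_smul hz hc
    simpa [smul_eq_mul, mul_comm] using this
  have hPkeq : Pk k0 = Pk (k0+1) := by
    refine le_antisymm ?_ (hdesc k0)
    exact Submodule.le_of_le_smul_of_le_jacobson_bot (IsNoetherian.noetherian _)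
      (le_of_eq (jacobson_eq_maximalIdeal ⊥ bot_ne_top).symm) hPkle
  -- extend back to A
  have hmapeq : Ideal.map φ (P^k0) = Ideal.map φ (P^(k0+1)) := by
    have h1 := IsLocalization.map_comap P.primeCompl A (Ideal.map φ (P^k0))
    have h2 := IsLocalization.map_comap P.primeCompl A (Ideal.map φ (P^(k0+1)))
    calc Ideal.map φ (P^k0) = Ideal.map φ (Pk k0) := h1.symm
      _ = Ideal.map φ (Pk (k0+1)) := by rw [hPkeq]
      _ = Ideal.map φ (P^(k0+1)) := h2
  -- Nakayama in A
  have hbot : (Ideal.map φ P)^k0 = ⊥ := by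
    refine Submodule.eq_bot_of_le_smul_of_le_jacobson_bot (Ideal.map φ P) _
      (IsNoetherian.noetherian _) ?_ ?_
    · rw [Ideal.smul_eq_mul, ← pow_succ', ← Ideal.map_pow, ← Ideal.map_pow, ← hmapeq]
    · rw [Localization.AtPrime.map_eq_maximalIdeal,
        jacobson_eq_maximalIdeal (⊥ : Ideal A) bot_ne_top]
  -- contradiction
  have htmem : φ t ∈ Ideal.map φ P := Ideal.mem_map_of_mem φ htP
  have hpow : (φ t)^k0 ∈ ((Ideal.map φ P)^k0 : Ideal A) := Ideal.pow_mem_pow htmem k0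
  rw [hbot, Ideal.mem_bot] at hpow
  rcases Nat.eq_zero_or_pos k0 with hk0 | hk0
  · rw [hk0, pow_zero] at hpow
    exact one_ne_zero hpow
  · have hinj : Function.Injective φ := by
      apply IsLocalization.injective A (M := P.primeCompl)
      intro s hs
      exact mem_nonZeroDivisors_of_ne_zero (fun h0 => hs (h0 ▸ P.zero_mem))
    have : φ (t^k0) = φ 0 := by rw [map_pow, map_zero, hpow]
    have := hinj this
    exact ht0 (pow_eq_zero_iff hk0.ne' |>.mp this)


theorem aux_pow_decomp (R : Type*) [CommRing R] [IsLocalRing R] (x y : R)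
    (hm : maximalIdeal R = Ideal.span {x, y}) (k : ℕ) :
    maximalIdeal R ^ k ≤ Ideal.span {x} ⊔ Ideal.span {y ^ k} := by
  induction k with
  | zero => simp [Ideal.one_eq_top, Ideal.span_singleton_one]
  | succ k ih =>
    rw [pow_succ]
    calc maximalIdeal R ^ k * maximalIdeal R
        ≤ (Ideal.span {x} ⊔ Ideal.span {y ^ k}) * maximalIdeal R :=
          Ideal.mul_mono_left ih
      _ = Ideal.span {x} * maximalIdeal R ⊔ Ideal.span {y ^ k} * maximalIdeal R :=
          Ideal.sup_mul _ _ _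
      _ ≤ Ideal.span {x} ⊔ Ideal.span {y ^ (k+1)} := by
          refine sup_le (le_sup_of_le_left ?_) ?_
          · exact Ideal.mul_le_left
          · rw [hm, Ideal.span_insert, Ideal.mul_sup]
            refine sup_le (le_sup_of_le_left ?_) (le_sup_of_le_right ?_)
            · rw [Ideal.span_singleton_mul_span_singleton,
                Ideal.span_singleton_le_span_singleton]
              exact ⟨y ^ k, by ring⟩
            · rw [Ideal.span_singleton_mul_span_singleton,
                Ideal.span_singleton_le_span_singleton]
              exact ⟨1, by ring⟩

theorem aux_krull (R : Type*) [CommRing R] [IsNoetherianRing R] [IsLocalRing R] (x : R)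
    (hxm : x ∈ maximalIdeal R) (c : R)
    (h : ∀ k, c ∈ Ideal.span {x} ⊔ maximalIdeal R ^ k) : c ∈ Ideal.span {x} := by
  have hne : (Ideal.span {x} : Ideal R) ≠ ⊤ := by
    intro htop
    exact (mem_maximalIdeal x).mp hxm (Ideal.span_singleton_eq_top.mp htop)
  set S := R ⧸ Ideal.span {x} with hS
  set π := Ideal.Quotient.mk (Ideal.span {x}) with hπ
  haveI : Nontrivial S := Ideal.Quotient.nontrivial_iff.mpr hne
  haveI : IsLocalRing S := IsLocalRing.of_surjective' π Ideal.Quotient.mk_surjective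
  set I : Ideal S := (maximalIdeal R).map π with hI
  have hInetop : I ≠ ⊤ := by
    intro htop
    have h1 : (1 : S) ∈ I := htop ▸ trivial
    rw [hI] at h1
    obtain ⟨w, hw, hw1⟩ := Ideal.mem_map_iff_of_surjective π Ideal.Quotient.mk_surjective |>.mp h1
    have : π (1 - w) = 0 := by rw [map_sub, hw1, map_one, sub_self]
    have hmem : (1:R) - w ∈ Ideal.span {x} := Ideal.Quotient.eq_zero_iff_mem.mp this
    have hxmI : Ideal.span {x} ≤ maximalIdeal R := by
      rw [Ideal.span_le]; simpa using hxm
    have : (1:R) ∈ maximalIdeal R := by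
      have := (maximalIdeal R).add_mem (hxmI hmem) hw
      simpa using this
    exact (mem_maximalIdeal 1).mp this isUnit_one
  have hc : ∀ k, π c ∈ I ^ k := by
    intro k
    obtain ⟨u, hu, v, hv, rfl⟩ := Submodule.mem_sup.mp (h k)
    have h1 : π u = 0 := Ideal.Quotient.eq_zero_iff_mem.mpr hu
    have h2 : π v ∈ I ^ k := by
      rw [hI, ← Ideal.map_pow]
      exact Ideal.mem_map_of_mem π hv
    rw [map_add, h1, zero_add]
    exact h2
  have hbot := Ideal.iInf_pow_eq_bot_of_isLocalRing I hInetop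
  have : π c ∈ (⨅ k : ℕ, I ^ k) := Submodule.mem_iInf _ |>.mpr hc
  rw [hbot, Ideal.mem_bot] at this
  exact Ideal.Quotient.eq_zero_iff_mem.mp this

theorem aux_reg (R : Type*) [CommRing R] [IsDomain R] [IsNoetherianRing R] [IsLocalRing R]
    (hdim : ringKrullDim R = 2) (x y : R) (hm : maximalIdeal R = Ideal.span {x, y})
    (c d : R) (hcd : c * y = d * x) : c ∈ Ideal.span {x} := by
  have hxm : x ∈ maximalIdeal R := by rw [hm]; exact Ideal.subset_span (by simp)
  have hym : y ∈ maximalIdeal R := by rw [hm]; exact Ideal.subset_span (by simp)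
  by_contra hc
  have hnotall : ∃ k, c ∉ Ideal.span {x} ⊔ maximalIdeal R ^ k := by
    by_contra hall
    push_neg at hall
    exact hc (aux_krull R x hxm c hall)
  -- least such k
  classical
  let K := Nat.find hnotall
  have hK : c ∉ Ideal.span {x} ⊔ maximalIdeal R ^ K := Nat.find_spec hnotall
  have hK0 : K ≠ 0 := by
    intro h0
    apply hK
    rw [h0, pow_zero, Ideal.one_eq_top, sup_top_eq]
    trivial
  obtain ⟨k, hk⟩ : ∃ k, K = k + 1 := ⟨K - 1, by omega⟩
  have hmem : c ∈ Ideal.span {x} ⊔ maximalIdeal R ^ k := by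
    by_contra hno
    have hle : K ≤ k := Nat.find_le hno
    omega
  obtain ⟨v1, hv1, g, hg, rfl⟩ := Submodule.mem_sup.mp hmem
  obtain ⟨f, rfl⟩ := Ideal.mem_span_singleton'.mp hv1
  -- decompose g
  have hgmem : g ∈ Ideal.span {x} ⊔ Ideal.span {y ^ k} := aux_pow_decomp R x y hm k hg
  obtain ⟨v2, hv2, w, hw, rfl⟩ := Submodule.mem_sup.mp hgmem
  obtain ⟨h', rfl⟩ := Ideal.mem_span_singleton'.mp hv2
  obtain ⟨u, rfl⟩ := Ideal.mem_span_singleton'.mp hw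
  -- now c = f*x + h'*x + u*y^k
  rcases em (IsUnit u) with hu | hu
  · -- y^(k+1) ∈ span x, contradiction via aux_no_pow_le_span
    have hy1 : u * y ^ (k+1) ∈ Ideal.span {x} := by
      rw [Ideal.mem_span_singleton']
      refine ⟨d - f * y - h' * y, ?_⟩
      linear_combination -hcd
    have hy2 : y ^ (k+1) ∈ Ideal.span {x} := by
      obtain ⟨uu, rfl⟩ := hu
      have := Ideal.mul_mem_left (Ideal.span {x}) (↑uu⁻¹) hy1
      rwa [← mul_assoc, Units.inv_mul, one_mul] at this
    have hpow : maximalIdeal R ^ (k+1) ≤ Ideal.span {x} := by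
      refine (aux_pow_decomp R x y hm (k+1)).trans (sup_le le_rfl ?_)
      rw [Ideal.span_le]
      simpa using hy2
    exact aux_no_pow_le_span R hdim x hxm (k+1) hpow
  · -- u ∈ m, so c ∈ span x ⊔ m^(k+1), contradiction with hK
    apply hK
    rw [hk]
    refine Submodule.mem_sup.mpr ⟨f*x + h'*x, ?_, u * y^k, ?_, by ring⟩
    · exact Ideal.add_mem _ (Ideal.mem_span_singleton'.mpr ⟨f, rfl⟩)
        (Ideal.mem_span_singleton'.mpr ⟨h', rfl⟩)
    · have hum : u ∈ maximalIdeal R := hu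
      have hyk : y ^ k ∈ maximalIdeal R ^ k := Ideal.pow_mem_pow hym k
      rw [pow_succ']
      exact Ideal.mul_mem_mul hum hyk

theorem aux_mem_span_triple {R : Type*} [CommRing R] {a b c w : R} :
    w ∈ Ideal.span {a, b, c} ↔ ∃ u v t, u*a + v*b + t*c = w := by
  constructor
  · intro hw
    rw [show ({a,b,c} : Set R) = insert a {b,c} from rfl, Ideal.mem_span_insert] at hw
    obtain ⟨u, z, hz, rfl⟩ := hw
    rw [show ({b,c} : Set R) = insert b {c} from rfl, Ideal.mem_span_insert] at hz
    obtain ⟨v, z', hz', rfl⟩ := hz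
    obtain ⟨t, rfl⟩ := Ideal.mem_span_singleton'.mp hz'
    exact ⟨u, v, t, by ring⟩
  · rintro ⟨u, v, t, rfl⟩
    have ha : a ∈ Ideal.span ({a,b,c} : Set R) := Ideal.subset_span (by simp)
    have hb : b ∈ Ideal.span ({a,b,c} : Set R) := Ideal.subset_span (by simp)
    have hc : c ∈ Ideal.span ({a,b,c} : Set R) := Ideal.subset_span (by simp)
    exact add_mem (add_mem (Ideal.mul_mem_left _ u ha) (Ideal.mul_mem_left _ v hb))
      (Ideal.mul_mem_left _ t hc)

theorem aux_A0 (R : Type*) [CommRing R] [IsDomain R] [IsNoetherianRing R] [IsLocalRing R]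
    (hdim : ringKrullDim R = 2) (x y : R) (hm : maximalIdeal R = Ideal.span {x, y})
    (hx0 : x ≠ 0) (e : R) (he : e ≠ 0) (w : R)
    (h1 : w * x ∈ Ideal.span {e}) (h2 : w * y ∈ Ideal.span {e}) : w ∈ Ideal.span {e} := by
  obtain ⟨c, hc⟩ := Ideal.mem_span_singleton'.mp h1
  obtain ⟨d, hd⟩ := Ideal.mem_span_singleton'.mp h2
  have hcd : c * y = d * x := by
    have : e * (c * y) = e * (d * x) := by linear_combination y * hc - x * hd
    exact mul_left_cancel₀ he this
  obtain ⟨f, hf⟩ := Ideal.mem_span_singleton'.mp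
    (aux_reg R hdim x y hm c d hcd)
  have : x * w = x * (f * e) := by linear_combination - hc - e * hf
  rw [mul_left_cancel₀ hx0 this]
  exact Ideal.mem_span_singleton'.mpr ⟨f, rfl⟩

theorem aux_A (R : Type*) [CommRing R] [IsDomain R] [IsNoetherianRing R] [IsLocalRing R]
    (hdim : ringKrullDim R = 2) (x y : R) (hm : maximalIdeal R = Ideal.span {x, y})
    (hx0 : x ≠ 0) (e : R) (he : e ≠ 0) (w : R) (k : ℕ)
    (h : ∀ v ∈ maximalIdeal R ^ k, w * v ∈ Ideal.span {e}) : w ∈ Ideal.span {e} := by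
  have hxm : x ∈ maximalIdeal R := by rw [hm]; exact Ideal.subset_span (by simp)
  have hym : y ∈ maximalIdeal R := by rw [hm]; exact Ideal.subset_span (by simp)
  induction k with
  | zero =>
    have := h 1 (by rw [pow_zero, Ideal.one_eq_top]; trivial)
    rwa [mul_one] at this
  | succ k ih =>
    apply ih
    intro v hv
    apply aux_A0 R hdim x y hm hx0 e he
    · have : v * x ∈ maximalIdeal R ^ (k+1) := by
        rw [pow_succ]; exact Ideal.mul_mem_mul hv hxm
      have := h _ this
      rwa [← mul_assoc] at this
    · have : v * y ∈ maximalIdeal R ^ (k+1) := by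
        rw [pow_succ]; exact Ideal.mul_mem_mul hv hym
      have := h _ this
      rwa [← mul_assoc] at this





theorem stmt_17 (R : Type*) [CommRing R] [IsDomain R] [IsNoetherianRing R] [IsLocalRing R]
    (hdim : ringKrullDim R = 2) (x y : R)
    (hm : maximalIdeal R = Ideal.span {x, y})
    (a b : R)
    (hQm2 : (Ideal.span {a, b} : Ideal R) ≤ maximalIdeal R ^ 2)
    (hQ : (Ideal.span {a, b} : Ideal R).radical = maximalIdeal R)
    (I : Ideal R) (hI : I = Submodule.colon (Ideal.span {a, b} : Ideal R) (maximalIdeal R)) :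
    (∃ c₁ c₂ c₃ : R, I = Ideal.span {c₁, c₂, c₃}) ∧
      ¬∃ d₁ d₂ : R, I = Ideal.span {d₁, d₂} := by
  classical
  set m := maximalIdeal R with hmdef
  set Q : Ideal R := Ideal.span {a, b} with hQdef
  have hxm : x ∈ m := by rw [hm]; exact Ideal.subset_span (by simp)
  have hym : y ∈ m := by rw [hm]; exact Ideal.subset_span (by simp)
  have haQ : a ∈ Q := Ideal.subset_span (by simp)
  have hbQ : b ∈ Q := Ideal.subset_span (by simp)
  have ham : a ∈ m := (Ideal.pow_le_self two_ne_zero) (hQm2 haQ)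
  have hbm : b ∈ m := (Ideal.pow_le_self two_ne_zero) (hQm2 hbQ)
  -- a power of m inside Q
  obtain ⟨N, hN⟩ : ∃ N, m ^ N ≤ Q := by
    obtain ⟨N, hN⟩ := Ideal.exists_radical_pow_le_of_fg Q (IsNoetherian.noetherian _)
    rw [hQ] at hN
    exact ⟨N, hN⟩
  -- x ≠ 0
  have hx0 : x ≠ 0 := by
    intro h0
    apply aux_no_pow_le_span R hdim y hym 1
    rw [pow_one, ← hmdef, hm, h0]
    rw [show ({(0:R), y} : Set R) = insert 0 {y} from rfl, Ideal.span_insert]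
    exact sup_le (Ideal.span_le.mpr (by simp)) le_rfl
  -- a ≠ 0, b ≠ 0
  have ha0 : a ≠ 0 := by
    intro h0
    apply aux_no_pow_le_span R hdim b hbm N
    refine hN.trans ?_
    rw [hQdef, h0, show ({(0:R), b} : Set R) = insert 0 {b} from rfl, Ideal.span_insert]
    exact sup_le (Ideal.span_le.mpr (by simp)) le_rfl
  have hb0 : b ≠ 0 := by
    intro h0
    apply aux_no_pow_le_span R hdim a ham N
    refine hN.trans ?_
    rw [hQdef, h0, show ({a, (0:R)} : Set R) = insert a {0} from rfl, Ideal.span_insert]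
    exact sup_le le_rfl (Ideal.span_le.mpr (by simp))
  -- "regular sequence" property for a, b
  have regQ1 : ∀ u v : R, u * a = v * b → u ∈ Ideal.span {b} := by
    intro u v huv
    apply aux_A R hdim x y hm hx0 b hb0 u N
    intro w hw
    obtain ⟨s1, s2, hs⟩ := Ideal.mem_span_pair.mp (hN hw)
    exact Ideal.mem_span_singleton'.mpr ⟨s1 * v + s2 * u, by linear_combination u * hs - s1 * huv⟩
  -- decompose a and b
  have hm2 : m ^ 2 = Ideal.span {x} * m ⊔ Ideal.span {y} * m := by
    rw [pow_two, hm]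
    rw [show ({x, y} : Set R) = insert x {y} from rfl, Ideal.span_insert, Ideal.sup_mul]
  obtain ⟨p, hpm, q, hqm, ha⟩ : ∃ p, p ∈ m ∧ ∃ q, q ∈ m ∧ a = x*p + y*q := by
    have := hQm2 haQ
    rw [hm2] at this
    obtain ⟨w1, hw1, w2, hw2, hsum⟩ := Submodule.mem_sup.mp this
    obtain ⟨p, hpm, hp⟩ := Ideal.mem_span_singleton_mul.mp hw1
    obtain ⟨q, hqm, hq⟩ := Ideal.mem_span_singleton_mul.mp hw2
    exact ⟨p, hpm, q, hqm, by rw [← hsum, ← hp, ← hq]⟩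
  obtain ⟨r, hrm, s, hsm, hb⟩ : ∃ r, r ∈ m ∧ ∃ s, s ∈ m ∧ b = x*r + y*s := by
    have := hQm2 hbQ
    rw [hm2] at this
    obtain ⟨w1, hw1, w2, hw2, hsum⟩ := Submodule.mem_sup.mp this
    obtain ⟨r, hrm, hr⟩ := Ideal.mem_span_singleton_mul.mp hw1
    obtain ⟨s, hsm, hs⟩ := Ideal.mem_span_singleton_mul.mp hw2
    exact ⟨r, hrm, s, hsm, by rw [← hsum, ← hr, ← hs]⟩
  set Δ : R := p * s - q * r with hΔdef
  have hsa : s * a - q * b = x * Δ := by rw [ha, hb, hΔdef]; ring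
  have hpb : p * b - r * a = y * Δ := by rw [ha, hb, hΔdef]; ring
  -- the key identity: I = (a, b, Δ)
  have hIabd : I = Ideal.span {a, b, Δ} := by
    apply le_antisymm
    · -- hard direction
      intro z hz
      rw [hI] at hz
      have hzx : z * x ∈ Q := by
        have := Submodule.mem_colon.mp hz x hxm
        simpa [smul_eq_mul] using this
      have hzy : z * y ∈ Q := by
        have := Submodule.mem_colon.mp hz y hym
        simpa [smul_eq_mul] using this
      obtain ⟨α, β, h1⟩ := Ideal.mem_span_pair.mp hzx
      obtain ⟨γ, δ, h2⟩ := Ideal.mem_span_pair.mp hzy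
      have hkey : (α*y - γ*x) * a = (δ*x - β*y) * b := by
        linear_combination y * h1 - x * h2
      obtain ⟨t, ht⟩ := Ideal.mem_span_singleton'.mp (regQ1 _ _ hkey)
      have hta : δ*x - β*y = t*a := by
        have : b * (δ*x - β*y) = b * (t*a) := by linear_combination - hkey - a * ht
        exact mul_left_cancel₀ hb0 this
      have hμy : (β + t*q) * y = (δ - t*p) * x := by linear_combination - hta - t * ha
      obtain ⟨μ, hμ⟩ := Ideal.mem_span_singleton'.mp (aux_reg R hdim x y hm _ _ hμy)
      have hνy : (α - t*s) * y = (γ + t*r) * x := by linear_combination - ht + t * hb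
      obtain ⟨ν, hν⟩ := Ideal.mem_span_singleton'.mp (aux_reg R hdim x y hm _ _ hνy)
      have hzfinal : z = ν*a + μ*b + t*Δ := by
        have : x * z = x * (ν*a + μ*b + t*Δ) := by
          linear_combination - h1 - a * hν - b * hμ + t * hsa
        exact mul_left_cancel₀ hx0 this
      rw [hzfinal]
      exact aux_mem_span_triple.mpr ⟨ν, μ, t, rfl⟩
    · -- easy direction
      rw [hI, Ideal.span_le]
      intro w hw
      simp only [Set.mem_insert_iff, Set.mem_singleton_iff] at hw
      rcases hw with rfl | rfl | rfl
      · exact Submodule.mem_colon.mpr fun v hv => by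
          simpa [smul_eq_mul] using Q.mul_mem_right v haQ
      · exact Submodule.mem_colon.mpr fun v hv => by
          simpa [smul_eq_mul] using Q.mul_mem_right v hbQ
      · refine Submodule.mem_colon.mpr fun v hv => ?_
        rw [hm] at hv
        obtain ⟨c, d, hcd⟩ := Ideal.mem_span_pair.mp hv
        have : Δ • v = (c*s - d*r)*a + (d*p - c*q)*b := by
          simp only [smul_eq_mul]
          linear_combination -c * hsa - d * hpb - Δ * hcd
        rw [this]
        exact Ideal.mem_span_pair.mpr ⟨c*s - d*r, d*p - c*q, rfl⟩
  refine ⟨⟨a, b, Δ, hIabd⟩, ?_⟩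
  rintro ⟨d1, d2, hd⟩
  -- m * (a,b,Δ) ≤ m * Q
  have hsplit : Ideal.span {a, b, Δ} = Q ⊔ Ideal.span {Δ} := by
    rw [hQdef, ← Ideal.span_union]
    congr 1
    ext u
    simp only [Set.mem_insert_iff, Set.mem_singleton_iff, Set.mem_union]
    tauto
  have hmI_le : m * Ideal.span {a, b, Δ} ≤ m * Q := by
    rw [hsplit, Ideal.mul_sup]
    refine sup_le le_rfl ?_
    rw [Ideal.mul_le]
    intro w hw z hz
    obtain ⟨c, hcΔ⟩ := Ideal.mem_span_singleton'.mp hz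
    rw [hm] at hw
    obtain ⟨e, f, hef⟩ := Ideal.mem_span_pair.mp hw
    have heq : w * z = ((c*e*s)*a + (c*f*p)*b) - ((c*f*r)*a + (c*e*q)*b) := by
      linear_combination -z*hef - (e*x + f*y)*hcΔ - (c*e)*hsa - (c*f)*hpb
    rw [heq]
    refine Submodule.sub_mem _ (Submodule.add_mem _ ?_ ?_) (Submodule.add_mem _ ?_ ?_)
    · exact Ideal.mul_mem_mul (m.mul_mem_left (c*e) hsm) haQ
    · exact Ideal.mul_mem_mul (m.mul_mem_left (c*f) hpm) hbQ
    · exact Ideal.mul_mem_mul (m.mul_mem_left (c*f) hrm) haQ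
    · exact Ideal.mul_mem_mul (m.mul_mem_left (c*e) hqm) hbQ
  have hmQ_le_Q : m * Q ≤ Q := Ideal.mul_le_right
  -- Δ ∉ Q
  have hQne : Q ≠ ⊤ := by
    intro htop
    have h1 : (1:R) ∈ Q := htop ▸ trivial
    have : (1:R) ∈ m := (Ideal.pow_le_self two_ne_zero) (hQm2 h1)
    exact (mem_maximalIdeal 1).mp this isUnit_one
  have hΔnotQ : Δ ∉ Q := by
    intro hΔQ
    have hex : ∃ k, m ^ k ≤ Q := ⟨N, hN⟩
    set n0 := Nat.find hex with hn0
    have hn0spec : m ^ n0 ≤ Q := Nat.find_spec hex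
    have hn0ne : n0 ≠ 0 := by
      intro h0
      rw [h0, pow_zero, Ideal.one_eq_top, top_le_iff] at hn0spec
      exact hQne hn0spec
    obtain ⟨k0, hk0⟩ : ∃ k0, n0 = k0 + 1 := ⟨n0 - 1, by omega⟩
    have hnle : ¬ m ^ k0 ≤ Q := Nat.find_min hex (by omega)
    obtain ⟨w, hwmem, hwQ⟩ := SetLike.not_le_iff_exists.mp hnle
    have hwI : w ∈ I := by
      rw [hI]
      refine Submodule.mem_colon.mpr fun v hv => ?_
      have : w * v ∈ m ^ k0 * m := Ideal.mul_mem_mul hwmem hv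
      rw [← pow_succ, ← hk0] at this
      simpa [smul_eq_mul] using hn0spec this
    have : w ∈ Q := by
      have h1 : w ∈ Ideal.span {a, b, Δ} := hIabd ▸ hwI
      have h2 : Ideal.span {a, b, Δ} ≤ Q := by
        rw [Ideal.span_le]
        intro u hu
        simp only [Set.mem_insert_iff, Set.mem_singleton_iff] at hu
        rcases hu with rfl | rfl | rfl
        exacts [haQ, hbQ, hΔQ]
      exact h2 h1
    exact hwQ this
  -- the coefficient lemma
  have hL : ∀ r' s' t' : R, r'*a + s'*b + t'*Δ ∈ m * Ideal.span {a, b, Δ} →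
      r' ∈ m ∧ s' ∈ m ∧ t' ∈ m := by
    intro r' s' t' hmem
    have hmemQ : r'*a + s'*b + t'*Δ ∈ Q := hmQ_le_Q (hmI_le hmem)
    have ht' : t' ∈ m := by
      by_contra htu
      obtain ⟨uu, huu⟩ := notMem_maximalIdeal.mp htu
      apply hΔnotQ
      have htQ : t'*Δ ∈ Q := by
        have := Q.sub_mem hmemQ (Q.add_mem (Q.mul_mem_left r' haQ) (Q.mul_mem_left s' hbQ))
        simpa using this
      have : Δ = ↑uu⁻¹ * (t'*Δ) := by
        rw [← huu, ← mul_assoc, Units.inv_mul, one_mul]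
      rw [this]
      exact Q.mul_mem_left _ htQ
    have hrs : r'*a + s'*b ∈ m * Q := by
      have h1 : r'*a + s'*b + t'*Δ ∈ m * Q := hmI_le hmem
      have h2 : t'*Δ ∈ m * Q := by
        refine hmI_le (Ideal.mul_mem_mul ht' ?_)
        exact Ideal.subset_span (by simp)
      have := Submodule.sub_mem _ h1 h2
      simpa using this
    have hmq2 : m * Q = Ideal.span {a} * m ⊔ Ideal.span {b} * m := by
      rw [hQdef, mul_comm, show ({a,b}:Set R) = insert a {b} from rfl, Ideal.span_insert,
        Ideal.sup_mul]
    rw [hmq2] at hrs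
    obtain ⟨w1, hw1, w2, hw2, hsum⟩ := Submodule.mem_sup.mp hrs
    obtain ⟨c1, hc1m, hc1⟩ := Ideal.mem_span_singleton_mul.mp hw1
    obtain ⟨c2, hc2m, hc2⟩ := Ideal.mem_span_singleton_mul.mp hw2
    have hra : (r' - c1) * a = (c2 - s') * b := by linear_combination - hsum - hc1 - hc2
    obtain ⟨u, hu⟩ := Ideal.mem_span_singleton'.mp (regQ1 _ _ hra)
    have hr' : r' ∈ m := by
      have hre : r' = c1 + u*b := by linear_combination - hu
      rw [hre]; exact m.add_mem hc1m (m.mul_mem_left u hbm)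
    have hs' : s' ∈ m := by
      have hcs : b * (c2 - s') = b * (u * a) := by linear_combination - hra - a * hu
      have hse : c2 - s' = u * a := mul_left_cancel₀ hb0 hcs
      have hse2 : s' = c2 - u*a := by linear_combination - hse
      rw [hse2]; exact m.sub_mem hc2m (m.mul_mem_left u ham)
    exact ⟨hr', hs', ht'⟩
  -- extract coefficients
  have haI : a ∈ Ideal.span {d1, d2} := by
    rw [← hd, hIabd]; exact Ideal.subset_span (by simp)
  have hbI : b ∈ Ideal.span {d1, d2} := by
    rw [← hd, hIabd]; exact Ideal.subset_span (by simp)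
  have hΔI : Δ ∈ Ideal.span {d1, d2} := by
    rw [← hd, hIabd]; exact Ideal.subset_span (by simp)
  obtain ⟨a1, a2, ha'⟩ := Ideal.mem_span_pair.mp haI
  obtain ⟨b1, b2, hb'⟩ := Ideal.mem_span_pair.mp hbI
  obtain ⟨g1, g2, hg'⟩ := Ideal.mem_span_pair.mp hΔI
  have hd1I : d1 ∈ Ideal.span {a, b, Δ} := by
    rw [← hIabd, hd]; exact Ideal.subset_span (by simp)
  have hd2I : d2 ∈ Ideal.span {a, b, Δ} := by
    rw [← hIabd, hd]; exact Ideal.subset_span (by simp)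
  obtain ⟨e1, e2, e3, hd1⟩ := aux_mem_span_triple.mp hd1I
  obtain ⟨f1, f2, f3, hd2⟩ := aux_mem_span_triple.mp hd2I
  set c11 := a1*e1 + a2*f1 with hc11
  set c12 := a1*e2 + a2*f2 with hc12
  set c13 := a1*e3 + a2*f3 with hc13
  set c21 := b1*e1 + b2*f1 with hc21
  set c22 := b1*e2 + b2*f2 with hc22
  set c23 := b1*e3 + b2*f3 with hc23
  set c31 := g1*e1 + g2*f1 with hc31
  set c32 := g1*e2 + g2*f2 with hc32
  set c33 := g1*e3 + g2*f3 with hc33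
  have rel1 : (c11 - 1)*a + c12*b + c13*Δ = 0 := by
    rw [hc11, hc12, hc13]; linear_combination a1*hd1 + a2*hd2 + ha'
  have rel2 : c21*a + (c22 - 1)*b + c23*Δ = 0 := by
    rw [hc21, hc22, hc23]; linear_combination b1*hd1 + b2*hd2 + hb'
  have rel3 : c31*a + c32*b + (c33 - 1)*Δ = 0 := by
    rw [hc31, hc32, hc33]; linear_combination g1*hd1 + g2*hd2 + hg'
  have hL1 := hL (c11 - 1) c12 c13 (by rw [rel1]; exact Submodule.zero_mem _)
  have hL2 := hL c21 (c22 - 1) c23 (by rw [rel2]; exact Submodule.zero_mem _)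
  have hL3 := hL c31 c32 (c33 - 1) (by rw [rel3]; exact Submodule.zero_mem _)
  -- determinant vanishes identically
  have hdet : c11*(c22*c33 - c23*c32) - c12*(c21*c33 - c23*c31)
      + c13*(c21*c32 - c22*c31) = 0 := by
    rw [hc11, hc12, hc13, hc21, hc22, hc23, hc31, hc32, hc33]; ring
  -- but the determinant is 1 mod m
  have hmne : m ≠ ⊤ := (maximalIdeal.isMaximal R).ne_top
  haveI := Ideal.Quotient.nontrivial_iff.mpr hmne
  set φ := Ideal.Quotient.mk m with hφ
  have pe : ∀ c : R, c - 1 ∈ m → φ c = 1 := by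
    intro c hc
    have := Ideal.Quotient.eq_zero_iff_mem.mpr hc
    rwa [map_sub, map_one, sub_eq_zero] at this
  have pz : ∀ c : R, c ∈ m → φ c = 0 := fun c hc => Ideal.Quotient.eq_zero_iff_mem.mpr hc
  have h11 := pe _ hL1.1
  have h12 := pz _ hL1.2.1
  have h13 := pz _ hL1.2.2
  have h21 := pz _ hL2.1
  have h22 := pe _ hL2.2.1
  have h23 := pz _ hL2.2.2
  have h31 := pz _ hL3.1
  have h32 := pz _ hL3.2.1
  have h33 := pe _ hL3.2.2
  have hcontr := congrArg φ hdet
  simp only [map_add, map_sub, map_mul, map_zero, h11, h12, h13, h21, h22, h23, h31, h32,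
    h33] at hcontr
  norm_num at hcontr
end

section
/- Let (R, m) be a two-dimensional regular local ring and Q = (a, b) a parameter ideal with Q ⊆ m^2. Then the socle ideal I = Q : m satisfies I^2 = QI. -/
open IsLocalRing

section Aux
set_option linter.unusedSectionVars false
set_option maxHeartbeats 1000000
variable {R : Type*} [CommRing R] [IsDomain R] [IsNoetherianRing R] [IsLocalRing R]

-- step 1: Artinian for modules killed by maximal ideal
lemma art_vs (M : Type*) [AddCommGroup M] [Module R M] [Module.Finite R M]
    (h : (maximalIdeal R) • (⊤ : Submodule R M) = ⊥) : IsArtinian R M := by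
  have htor : Module.IsTorsionBySet R M (maximalIdeal R) := by
    intro x r
    have : (r : R) • x ∈ (maximalIdeal R) • (⊤ : Submodule R M) :=
      Submodule.smul_mem_smul r.2 trivial
    rw [h] at this
    simpa using this
  letI : Module (R ⧸ maximalIdeal R) M := htor.module
  haveI : IsScalarTower R (R ⧸ maximalIdeal R) M := htor.isScalarTower
  haveI : Module.Finite (R ⧸ maximalIdeal R) M :=
    Module.Finite.of_restrictScalars_finite R _ _
  haveI : (maximalIdeal R).IsMaximal := maximalIdeal.isMaximal R
  letI : Field (R ⧸ maximalIdeal R) := Ideal.Quotient.field _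
  haveI : IsArtinianRing (R ⧸ maximalIdeal R) := DivisionRing.instIsArtinianRing
  haveI : IsArtinian (R ⧸ maximalIdeal R) M := isArtinian_of_fg_of_artinian'
  -- transfer to R
  let f : Submodule R M → Submodule (R ⧸ maximalIdeal R) M := fun N =>
    { carrier := N
      add_mem' := fun ha hb => N.add_mem ha hb
      zero_mem' := N.zero_mem
      smul_mem' := by
        rintro c xx hx
        obtain ⟨r, rfl⟩ := Ideal.Quotient.mk_surjective c
        have : (Ideal.Quotient.mk (maximalIdeal R) r) • xx = r • xx := htor.mk_smul r xx
        rw [this]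
        exact N.smul_mem r hx }
  have hf : StrictMono f := fun N N' h => by
    rcases SetLike.lt_iff_le_and_exists.mp h with ⟨hle, z, hz, hz'⟩
    exact SetLike.lt_iff_le_and_exists.mpr ⟨fun w hw => hle hw, z, hz, hz'⟩
  exact hf.wellFoundedLT

lemma art_pow (N : ℕ) (M : Type*) [AddCommGroup M] [Module R M] [Module.Finite R M]
    (h : (maximalIdeal R) ^ N • (⊤ : Submodule R M) = ⊥) : IsArtinian R M := by
  induction N generalizing M with
  | zero =>
    simp only [pow_zero, Ideal.one_eq_top, Submodule.top_smul] at h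
    haveI : Subsingleton M := subsingleton_of_forall_eq 0 fun x => by
      have hx : x ∈ (⊥ : Submodule R M) := h ▸ (Submodule.mem_top : x ∈ (⊤ : Submodule R M))
      simpa using hx
    infer_instance
  | succ n ih =>
    haveI : IsNoetherian R M := isNoetherian_of_isNoetherianRing_of_finite R M
    set K : Submodule R M := (maximalIdeal R) ^ n • ⊤ with hKdef
    haveI : Module.Finite R K := Module.Finite.iff_fg.mpr (IsNoetherian.noetherian K)
    have hmK : (maximalIdeal R) • K = ⊥ := by
      rw [hKdef, ← Submodule.smul_assoc, smul_eq_mul, ← pow_succ']; exact h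
    have hartK : IsArtinian R K := by
      apply art_vs
      rw [eq_bot_iff]
      refine Submodule.smul_le.mpr fun r hr z _ => ?_
      have : r • (z : M) ∈ (maximalIdeal R) • K := Submodule.smul_mem_smul hr z.2
      rw [hmK] at this
      simpa [Submodule.mem_bot] using Subtype.ext (by simpa using this)
    have hartQ : IsArtinian R (M ⧸ K) := by
      apply ih
      have : (⊤ : Submodule R (M ⧸ K)) = Submodule.map K.mkQ ⊤ := by
        rw [Submodule.map_top, Submodule.range_mkQ]
      rw [this, ← Submodule.map_smul'', ← hKdef]
      rw [eq_bot_iff, Submodule.map_le_iff_le_comap]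
      exact le_of_eq (Submodule.ker_mkQ K).symm
    exact (isArtinian_iff_submodule_quotient K).mpr ⟨hartK, hartQ⟩

lemma quot_tor (I : Ideal R) : I • (⊤ : Submodule R (R ⧸ I)) = ⊥ := by
  rw [eq_bot_iff]
  refine Submodule.smul_le.mpr fun r hr z _ => ?_
  obtain ⟨s, rfl⟩ := Ideal.Quotient.mk_surjective (I := I) z
  have h1 : r • (Ideal.Quotient.mk I) s = Ideal.Quotient.mk I (r * s) := by
    rw [Algebra.smul_def, Ideal.Quotient.algebraMap_eq]
    exact (map_mul _ r s).symm
  rw [Submodule.mem_bot, h1, Ideal.Quotient.eq_zero_iff_mem]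
  exact I.mul_mem_right s hr


lemma rad_principal_ne (hdim : ringKrullDim R = 2) (c : R) :
    (Ideal.span {c}).radical ≠ maximalIdeal R := by
  intro hrad
  have hdim' : Order.krullDim (PrimeSpectrum R) = 2 := hdim
  -- extract a chain of primes of length 2
  obtain ⟨p, hp⟩ : ∃ p : LTSeries (PrimeSpectrum R), p.length = 2 := by
    by_contra hcon
    push_neg at hcon
    have hle : ∀ p : LTSeries (PrimeSpectrum R), (p.length : ℕ∞) ≤ (1 : ℕ∞) := by
      intro p
      by_contra hgt
      push_neg at hgt
      have h2 : 2 ≤ p.length := by exact_mod_cast hgt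
      exact hcon (p.take ⟨2, by omega⟩) (by simp)
    have hle2 : Order.krullDim (PrimeSpectrum R) ≤ ((1 : ℕ∞) : WithBot ℕ∞) := by
      rw [Order.krullDim_eq_iSup_length]
      exact_mod_cast iSup_le hle
    rw [hdim'] at hle2
    norm_num at hle2
  have h01 : p.toFun ⟨0, by omega⟩ < p.toFun ⟨1, by omega⟩ := p.strictMono (by simp [Fin.lt_def, hp])
  have h12 : p.toFun ⟨1, by omega⟩ < p.toFun ⟨2, by omega⟩ := p.strictMono (by simp [Fin.lt_def, hp])
  set P1 := p.toFun ⟨1, by omega⟩ with hP1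
  haveI hP1p : P1.asIdeal.IsPrime := P1.2
  have hPneb : P1.asIdeal ≠ ⊥ := by
    have h01' : (p.toFun ⟨0, by omega⟩).asIdeal < P1.asIdeal :=
      (PrimeSpectrum.asIdeal_lt_asIdeal _ _).mpr h01
    exact ne_bot_of_gt (lt_of_le_of_lt bot_le h01')
  have hPnem : P1.asIdeal ≠ maximalIdeal R := by
    have h12' : P1.asIdeal < (p.toFun ⟨2, by omega⟩).asIdeal :=
      (PrimeSpectrum.asIdeal_lt_asIdeal _ _).mpr h12
    have hle := IsLocalRing.le_maximalIdeal (p.toFun ⟨2, by omega⟩).2.ne_top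
    exact ne_of_lt (lt_of_lt_of_le h12' hle)
  set P := P1.asIdeal
  -- c is not in P
  have hcP : c ∈ P.primeCompl := by
    intro hc
    have : (Ideal.span {c}).radical ≤ P := by
      rw [← hP1p.radical]
      exact Ideal.radical_mono ((Ideal.span_singleton_le_iff_mem P).mpr hc)
    rw [hrad] at this
    exact hPnem (le_antisymm (IsLocalRing.le_maximalIdeal hP1p.ne_top) this)
  -- localization at P
  set L := Localization.AtPrime P with hL
  haveI : IsNoetherianRing L := IsLocalization.isNoetherianRing P.primeCompl L inferInstance
  set φ := algebraMap R L with hφ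
  set mL := maximalIdeal L with hmL
  set Pn : ℕ → Ideal R := fun n => Ideal.comap φ (mL ^ n) with hPn
  have hPnanti : ∀ n, Pn (n+1) ≤ Pn n := fun n =>
    Ideal.comap_mono (Ideal.pow_le_pow_right (by omega))
  have hcu : IsUnit (φ c) := by
    rw [hφ, IsLocalization.AtPrime.isUnit_to_map_iff L P c]
    exact hcP
  have hcolon : ∀ n r, r * c ∈ Pn n → r ∈ Pn n := by
    intro n r hrc
    have : φ r * φ c ∈ mL ^ n := by
      rw [← map_mul]; exact hrc
    rw [mul_comm] at this
    exact (Ideal.unit_mul_mem_iff_mem _ hcu).mp this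
  -- m ^ G ≤ span {c}
  obtain ⟨G, hG⟩ := Ideal.exists_radical_pow_le_of_fg (Ideal.span {c})
    (IsNoetherian.noetherian _)
  rw [hrad] at hG
  -- stabilization of the chain span{c} ⊔ Pn n, via artinian quotient
  set I0 : Ideal R := (maximalIdeal R) ^ G with hI0
  haveI hart : IsArtinian R (R ⧸ I0) := art_pow G _ (quot_tor I0)
  set J : ℕ → Ideal R := fun n => Ideal.span {c} ⊔ Pn n with hJ
  have hJanti : ∀ n, J (n+1) ≤ J n := fun n => sup_le_sup_left (hPnanti n) _
  have hJI0 : ∀ n, I0 ≤ J n := fun n => le_trans hG (le_sup_left)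
  obtain ⟨n, hn⟩ := IsArtinian.monotone_stabilizes
    (⟨fun n => Submodule.map (Submodule.mkQ (I0 : Submodule R R)) (J n : Submodule R R),
      fun i j hij => by
        dsimp
        exact Submodule.map_mono (by
          induction hij with
          | refl => exact le_rfl
          | step h ih => exact le_trans (hJanti _) ih)⟩ :
      ℕ →o (Submodule R (R ⧸ (I0 : Submodule R R)))ᵒᵈ)
  have hJeq : J n = J (n + 1) := by
    have h1 := hn (n+1) (by omega)
    change Submodule.map _ (J n) = Submodule.map _ (J (n+1)) at h1
    have h2 := congrArg (Submodule.comap (Submodule.mkQ (I0 : Submodule R R))) h1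
    rw [Submodule.comap_map_eq, Submodule.comap_map_eq, Submodule.ker_mkQ] at h2
    rwa [sup_eq_left.mpr (hJI0 n), sup_eq_left.mpr (hJI0 (n+1))] at h2
  -- step: every element of Pn n is in Pn (n+1) ⊔ (c)^k
  have hstep : ∀ u ∈ Pn n, ∃ r ∈ Pn n, ∃ v ∈ Pn (n+1), u = v + r * c := by
    intro u hu
    have : u ∈ J (n+1) := by
      rw [← hJeq]
      exact (le_sup_right : Pn n ≤ Ideal.span {c} ⊔ Pn n) hu
    rw [hJ] at this
    obtain ⟨s, hs, v, hv, rfl⟩ := Submodule.mem_sup.mp this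
    obtain ⟨r, rfl⟩ : ∃ r, s = r * c := by
      obtain ⟨r, hr⟩ := Ideal.mem_span_singleton.mp hs
      exact ⟨r, by rw [hr, mul_comm]⟩
    refine ⟨r, ?_, v, hv, by ring⟩
    apply hcolon
    have : r * c = (r * c + v) - v := by ring
    rw [this]
    exact Submodule.sub_mem _ hu (hPnanti n hv)
  have hiter : ∀ k, ∀ u ∈ Pn n, ∃ v ∈ Pn (n+1), ∃ w ∈ (Ideal.span {c}) ^ k, u = v + w := by
    intro k
    induction k with
    | zero => intro u hu; exact ⟨0, Submodule.zero_mem _, u, by rw [pow_zero, Ideal.one_eq_top]; trivial, by ring⟩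
    | succ k ih =>
      intro u hu
      obtain ⟨r, hr, v, hv, rfl⟩ := hstep u hu
      obtain ⟨v', hv', w', hw', rfl⟩ := ih r hr
      refine ⟨v + v' * c, Submodule.add_mem _ hv (Ideal.mul_mem_right _ _ hv'), w' * c, ?_, by ring⟩
      rw [pow_succ]
      exact Ideal.mul_mem_mul hw' (Ideal.mem_span_singleton_self c)
  -- Krull intersection: Pn n = Pn (n+1)
  have hPneq : Pn n = Pn (n+1) := by
    refine le_antisymm ?_ (hPnanti n)
    intro u hu
    have hcle : Ideal.span {c} ≤ maximalIdeal R := le_trans Ideal.le_radical hrad.le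
    have hcne : Ideal.span {c} ≠ ⊤ := fun htop =>
      (maximalIdeal.isMaximal R).ne_top (top_le_iff.mp (htop ▸ hcle))
    have hbot := Ideal.iInf_pow_smul_eq_bot_of_isLocalRing
      (I := Ideal.span {c}) (M := R ⧸ (Pn (n+1) : Submodule R R)) hcne
    have hmem : Submodule.mkQ (Pn (n+1) : Submodule R R) u ∈
        (⨅ i : ℕ, (Ideal.span {c}) ^ i • (⊤ : Submodule R (R ⧸ (Pn (n+1) : Submodule R R)))) := by
      rw [Submodule.mem_iInf]
      intro k
      obtain ⟨v, hv, w, hw, rfl⟩ := hiter k u hu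
      have : Submodule.mkQ (Pn (n+1) : Submodule R R) (v + w)
          = Submodule.mkQ (Pn (n+1) : Submodule R R) w := by
        rw [map_add]
        rw [show Submodule.mkQ (Pn (n+1) : Submodule R R) v = 0 from
          (Submodule.Quotient.mk_eq_zero _).mpr hv]
        simp
      rw [this]
      have : Submodule.mkQ (Pn (n+1) : Submodule R R) w
          = w • (Submodule.mkQ (Pn (n+1) : Submodule R R) 1) := by
        rw [← map_smul, smul_eq_mul, mul_one]
      rw [this]
      exact Submodule.smul_mem_smul hw trivial
    rw [hbot, Submodule.mem_bot] at hmem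
    exact (Submodule.Quotient.mk_eq_zero _).mp hmem
  -- transfer upstairs : mL ^ n = mL ^ (n+1), hence mL ^ n = ⊥
  have hup : mL ^ n = mL ^ (n + 1) := by
    have h1 : Ideal.map φ (Pn n) = mL ^ n := IsLocalization.map_comap P.primeCompl L _
    have h2 : Ideal.map φ (Pn (n+1)) = mL ^ (n+1) := IsLocalization.map_comap P.primeCompl L _
    rw [← h1, ← h2, hPneq]
  have hall : ∀ k, mL ^ n = mL ^ (n + k) := by
    intro k
    induction k with
    | zero => rfl
    | succ k ih =>
      have : mL ^ (n + (k+1)) = mL ^ (n + k) * mL := by rw [← pow_succ]; ring_nf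
      rw [this, ← ih, show mL ^ n * mL = mL ^ (n+1) from (pow_succ mL n).symm, ← hup]
  have hbotL : mL ^ n = ⊥ := by
    have : mL ^ n ≤ ⨅ k : ℕ, mL ^ k := by
      refine le_iInf fun k => ?_
      rcases le_total k n with h | h
      · exact Ideal.pow_le_pow_right h
      · rw [hall (k - n)]
        have : n + (k - n) = k := by omega
        rw [this]
    have hKrull : (⨅ k : ℕ, (maximalIdeal L) ^ k) = ⊥ :=
      Ideal.iInf_pow_eq_bot_of_isLocalRing (maximalIdeal L) (maximalIdeal.isMaximal L).ne_top
    rw [← hmL] at hKrull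
    rw [hKrull] at this
    exact le_bot_iff.mp this
  -- final contradiction
  obtain ⟨u, huP, hune⟩ := Submodule.exists_mem_ne_zero_of_ne_bot hPneb
  have huL : φ u ∈ mL := by
    rw [hmL, hφ, ← Localization.AtPrime.map_eq_maximalIdeal]
    exact Ideal.mem_map_of_mem _ huP
  have hpow : (φ u) ^ n ∈ mL ^ n := Ideal.pow_mem_pow huL n
  rw [hbotL, Submodule.mem_bot] at hpow
  have hune' : φ u ≠ 0 := by
    have hinj : Function.Injective φ :=
      IsLocalization.injective L P.primeCompl_le_nonZeroDivisors
    intro h0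
    exact hune (hinj (by rw [h0, map_zero]))
  exact (pow_ne_zero n hune') hpow

variable (hdim : ringKrullDim R = 2) {x y : R} (hm : maximalIdeal R = Ideal.span {x, y})

include hdim hm

lemma rad_x_lt : ∀ N : ℕ, y ^ N ∉ Ideal.span {x} := by
  intro N hN
  apply rad_principal_ne hdim x
  apply le_antisymm
  · calc (Ideal.span {x}).radical ≤ (maximalIdeal R).radical := by
          apply Ideal.radical_mono
          rw [hm]
          exact Ideal.span_mono (by simp)
      _ = maximalIdeal R := ((maximalIdeal.isMaximal R).isPrime.radical)
  · rw [hm, Ideal.span_le]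
    rintro z (rfl | rfl)
    · exact Ideal.le_radical (Ideal.mem_span_singleton_self _)
    · simp only [SetLike.mem_coe, Ideal.mem_radical_iff]
      exact ⟨N, hN⟩

lemma x_ne_zero : x ≠ 0 := by
  rintro rfl
  apply rad_principal_ne hdim y
  have hsp : Ideal.span {(0:R), y} = Ideal.span {y} := by
    apply le_antisymm
    · rw [Ideal.span_le]
      rintro z (rfl | rfl)
      · simp
      · exact Ideal.mem_span_singleton_self _
    · exact Ideal.span_mono (by simp)
  apply le_antisymm
  · calc (Ideal.span {y}).radical ≤ (maximalIdeal R).radical := by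
          apply Ideal.radical_mono; rw [hm, hsp]
      _ = maximalIdeal R := ((maximalIdeal.isMaximal R).isPrime.radical)
  · rw [hm, hsp]
    exact Ideal.le_radical

lemma span_x_prime : (Ideal.span {x} : Ideal R).IsPrime := by
  rw [← Ideal.Quotient.isDomain_iff_prime]
  set S := R ⧸ Ideal.span {x} with hS
  set π := Ideal.Quotient.mk (Ideal.span {x}) with hπ
  have hxm : Ideal.span {x} ≤ maximalIdeal R := by
    rw [hm]; exact Ideal.span_mono (by simp)
  have hnetop : Ideal.span {x} ≠ ⊤ :=
    fun h => (maximalIdeal.isMaximal R).ne_top (top_le_iff.mp (h ▸ hxm))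
  haveI : Nontrivial S := Ideal.Quotient.nontrivial_iff.mpr hnetop
  haveI : IsLocalRing S := IsLocalRing.of_surjective' π Ideal.Quotient.mk_surjective
  -- π y is not nilpotent
  have hynil : ∀ k : ℕ, (π y) ^ k ≠ 0 := by
    intro k hk
    rw [← map_pow, hπ, Ideal.Quotient.eq_zero_iff_mem] at hk
    exact rad_x_lt hdim hm k hk
  -- the maximal ideal of S is generated by π y
  have hmaxS : maximalIdeal S = Ideal.span {π y} := by
    apply le_antisymm
    · intro z hz
      obtain ⟨r, rfl⟩ := Ideal.Quotient.mk_surjective (I := Ideal.span {x}) z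
      have hr : r ∈ maximalIdeal R := by
        by_contra hrn
        apply hz
        have hru : IsUnit r := by
          by_contra hh
          exact hrn ((IsLocalRing.mem_maximalIdeal r).mpr hh)
        exact hru.map π
      rw [hm, Ideal.mem_span_pair] at hr
      obtain ⟨c, d, hcd⟩ := hr
      rw [Ideal.mem_span_singleton']
      refine ⟨π d, ?_⟩
      have hx0 : π x = 0 := Ideal.Quotient.eq_zero_iff_mem.mpr (Ideal.mem_span_singleton_self x)
      calc π d * π y = π c * π x + π d * π y := by rw [hx0]; ring
        _ = π (c * x + d * y) := by rw [map_add, map_mul, map_mul]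
        _ = π r := by rw [hcd]
    · rw [Ideal.span_le]
      rintro z rfl
      rw [SetLike.mem_coe, IsLocalRing.mem_maximalIdeal, mem_nonunits_iff]
      intro hu
      obtain ⟨v, hv⟩ := hu.exists_right_inv
      obtain ⟨w, rfl⟩ := Ideal.Quotient.mk_surjective (I := Ideal.span {x}) v
      rw [← map_mul, ← map_one π, hπ, Ideal.Quotient.mk_eq_mk_iff_sub_mem] at hv
      obtain ⟨k, hk⟩ := Ideal.mem_span_singleton'.mp hv
      have h1 : (1 : R) ∈ maximalIdeal R := by
        rw [hm, Ideal.mem_span_pair]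
        exact ⟨-k, w, by linear_combination -hk⟩
      exact (maximalIdeal.isMaximal R).ne_top ((Ideal.eq_top_iff_one _).mpr h1)
  -- S is a domain
  haveI : NoZeroDivisors S := by
    constructor
    intro s s' hss
    by_contra hcon
    push_neg at hcon
    obtain ⟨hs, hs'⟩ := hcon
    have hval : ∀ s : S, s ≠ 0 → ∃ (k : ℕ) (u : S), IsUnit u ∧ s = u * (π y) ^ k := by
      intro s hs
      have hnall : ¬ (∀ i, s ∈ (maximalIdeal S) ^ i) := by
        intro hall
        apply hs
        have : s ∈ (⨅ i : ℕ, (maximalIdeal S) ^ i) := Submodule.mem_iInf _ |>.mpr hall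
        rwa [Ideal.iInf_pow_eq_bot_of_isLocalRing (maximalIdeal S)
          (maximalIdeal.isMaximal S).ne_top, Submodule.mem_bot] at this
      push_neg at hnall
      have hex : ∃ i, s ∉ (maximalIdeal S) ^ i := hnall
      classical
      set k := Nat.find hex with hkdef
      have hk1 : s ∉ (maximalIdeal S) ^ k := Nat.find_spec hex
      have hk0 : k ≠ 0 := by
        intro h0
        apply hk1
        rw [h0, pow_zero, Ideal.one_eq_top]; trivial
      have hk2 : s ∈ (maximalIdeal S) ^ (k - 1) := by
        by_contra hc
        exact Nat.find_min hex (by omega : k - 1 < k) hc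
      rw [hmaxS, Ideal.span_singleton_pow, Ideal.mem_span_singleton] at hk2
      obtain ⟨u, hu⟩ := hk2
      refine ⟨k - 1, u, ?_, by rw [hu]; ring⟩
      by_contra hnu
      apply hk1
      have hum : u ∈ maximalIdeal S := IsLocalRing.mem_maximalIdeal u |>.mpr hnu
      rw [hmaxS, Ideal.mem_span_singleton] at hum
      obtain ⟨u', hu'⟩ := hum
      rw [hmaxS, Ideal.span_singleton_pow, Ideal.mem_span_singleton]
      refine ⟨u', ?_⟩
      calc s = π y ^ (k-1) * (π y * u') := by rw [hu, hu']
        _ = π y ^ ((k-1)+1) * u' := by rw [pow_succ]; ring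
        _ = π y ^ k * u' := by rw [Nat.sub_add_cancel (by omega : 1 ≤ k)]
    obtain ⟨k, u, huu, hku⟩ := hval s hs
    obtain ⟨j, w, hww, hjw⟩ := hval s' hs'
    have : (u * w) * (π y) ^ (k + j) = 0 := by
      rw [pow_add]
      calc (u * w) * ((π y) ^ k * (π y) ^ j) = (u * (π y)^k) * (w * (π y)^j) := by ring
        _ = s * s' := by rw [← hku, ← hjw]
        _ = 0 := hss
    exact hynil (k + j) ((IsUnit.mul_right_eq_zero (huu.mul hww)).mp this)
  exact { exists_pair_ne := ⟨0, 1, zero_ne_one⟩ }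

lemma koszul : ∀ c d : R, c * x + d * y = 0 → ∃ t, c = t * y ∧ d = -(t * x) := by
  intro c d hcd
  have hdy : d * y ∈ Ideal.span {x} := by
    rw [Ideal.mem_span_singleton]
    exact ⟨-c, by linear_combination hcd⟩
  have hyx : y ∉ Ideal.span {x} := by
    have := rad_x_lt hdim hm 1
    rwa [pow_one] at this
  haveI := span_x_prime hdim hm
  have hd : d ∈ Ideal.span {x} := by
    rcases (Ideal.IsPrime.mem_or_mem ‹_› hdy) with h | h
    · exact h
    · exact absurd h hyx
  obtain ⟨t', ht'⟩ := Ideal.mem_span_singleton'.mp hd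
  refine ⟨-t', ?_, by rw [← ht']; ring⟩
  have hx0 := x_ne_zero hdim hm
  apply mul_left_cancel₀ hx0
  linear_combination hcd + y * ht'

lemma lemD : ∀ θ g : R, θ ∣ g * x → θ ∣ g * y → θ ∣ g := by
  intro θ g ⟨u, hu⟩ ⟨v, hv⟩
  rcases eq_or_ne θ 0 with rfl | hθ
  · rw [zero_mul] at hu
    rcases mul_eq_zero.mp hu with rfl | hx
    · exact dvd_refl 0
    · exact absurd hx (x_ne_zero hdim hm)
  · have huv : v * x + (-u) * y = 0 := by
      apply mul_left_cancel₀ hθ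
      linear_combination y * hu - x * hv
    obtain ⟨t, htv, htu⟩ := koszul hdim hm _ _ huv
    refine ⟨t, ?_⟩
    apply mul_left_cancel₀ (x_ne_zero hdim hm)
    have hutx : u = t * x := by linear_combination -htu
    linear_combination hu + θ * hutx

omit hdim hm

include hdim hm in
lemma lemE (θ g : R) (N M : ℕ) (hN : θ ∣ g * x ^ N) (hM : θ ∣ g * y ^ M) : θ ∣ g := by
  have claim : ∀ k i j : ℕ, i + j + k = N + M → θ ∣ g * x ^ i * y ^ j := by
    intro k
    induction k with
    | zero =>
      intro i j hij
      rcases le_or_gt N i with h | h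
      · obtain ⟨i', rfl⟩ : ∃ i', i = N + i' := ⟨i - N, by omega⟩
        have : g * x ^ (N + i') * y ^ j = (g * x ^ N) * (x ^ i' * y ^ j) := by
          rw [pow_add]; ring
        rw [this]
        exact Dvd.dvd.mul_right hN _
      · have hMj : M ≤ j := by omega
        obtain ⟨j', rfl⟩ : ∃ j', j = M + j' := ⟨j - M, by omega⟩
        have : g * x ^ i * y ^ (M + j') = (g * y ^ M) * (x ^ i * y ^ j') := by
          rw [pow_add]; ring
        rw [this]
        exact Dvd.dvd.mul_right hM _
    | succ k ih =>
      intro i j hij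
      apply lemD hdim hm θ (g * x ^ i * y ^ j)
      · have : g * x ^ i * y ^ j * x = g * x ^ (i+1) * y ^ j := by rw [pow_succ]; ring
        rw [this]; exact ih (i+1) j (by omega)
      · have : g * x ^ i * y ^ j * y = g * x ^ i * y ^ (j+1) := by rw [pow_succ]; ring
        rw [this]; exact ih i (j+1) (by omega)
  have := claim (N + M) 0 0 (by omega)
  simpa using this

lemma mem_span_triple {u v w z : R} :
    z ∈ Ideal.span {u, v, w} ↔ ∃ c d e, c * u + d * v + e * w = z := by
  constructor
  · intro hz
    rw [show ({u, v, w} : Set R) = insert u {v, w} from rfl, Ideal.mem_span_insert] at hz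
    obtain ⟨c, z', hz', rfl⟩ := hz
    rw [Ideal.mem_span_pair] at hz'
    obtain ⟨d, e, hde⟩ := hz'
    exact ⟨c, d, e, by rw [← hde]; ring⟩
  · rintro ⟨c, d, e, rfl⟩
    have hu : u ∈ Ideal.span {u, v, w} := Ideal.subset_span (by simp)
    have hv : v ∈ Ideal.span {u, v, w} := Ideal.subset_span (by simp)
    have hw : w ∈ Ideal.span {u, v, w} := Ideal.subset_span (by simp)
    exact Submodule.add_mem _ (Submodule.add_mem _ (Ideal.mul_mem_left _ c hu)
      (Ideal.mul_mem_left _ d hv)) (Ideal.mul_mem_left _ e hw)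

include hm in
lemma max_sq : maximalIdeal R ^ 2 = Ideal.span {x*x, x*y, y*y} := by
  rw [hm, pow_two, Ideal.span_pair_mul_span_pair]
  have hset : ({x*x, x*y, y*x, y*y} : Set R) = {x*x, x*y, y*y} := by
    rw [mul_comm y x]
    simp [Set.insert_comm]
  rw [hset]

end Aux

set_option maxHeartbeats 1000000 in
theorem stmt_18 (R : Type*) [CommRing R] [IsDomain R] [IsNoetherianRing R] [IsLocalRing R]
    (hdim : ringKrullDim R = 2) (x y : R)
    (hm : maximalIdeal R = Ideal.span {x, y})
    (a b : R)
    (hQm2 : (Ideal.span {a, b} : Ideal R) ≤ maximalIdeal R ^ 2)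
    (hQ : (Ideal.span {a, b} : Ideal R).radical = maximalIdeal R)
    (I : Ideal R) (hI : I = Submodule.colon (Ideal.span {a, b} : Ideal R) (maximalIdeal R)) :
    I ^ 2 = Ideal.span {a, b} * I := by
  set_option maxHeartbeats 3000000 in
  have haQ : a ∈ Ideal.span {a, b} := Ideal.subset_span (by simp)
  have hbQ : b ∈ Ideal.span {a, b} := Ideal.subset_span (by simp)
  -- decompose a and b in m^2
  have ham2 := hQm2 haQ
  have hbm2 := hQm2 hbQ
  rw [max_sq hm, mem_span_triple] at ham2 hbm2
  obtain ⟨a₁, a₂, a₃, ha⟩ := ham2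
  obtain ⟨b₁, b₂, b₃, hb⟩ := hbm2
  obtain ⟨α, hα⟩ : ∃ α : R, α = a₁*x + a₂*y := ⟨_, rfl⟩
  obtain ⟨β, hβ⟩ : ∃ β : R, β = a₃*y := ⟨_, rfl⟩
  obtain ⟨γ, hγ⟩ : ∃ γ : R, γ = b₁*x + b₂*y := ⟨_, rfl⟩
  obtain ⟨δ, hδ⟩ : ∃ δ : R, δ = b₃*y := ⟨_, rfl⟩
  obtain ⟨Δ, hΔ⟩ : ∃ Δ : R, Δ = α*δ - β*γ := ⟨_, rfl⟩
  have ha2 : a = α*x + β*y := by subst hα hβ; linear_combination -ha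
  have hb2 : b = γ*x + δ*y := by subst hγ hδ; linear_combination -hb
  have hxΔ : x*Δ = δ*a - β*b := by linear_combination x*hΔ - δ*ha2 + β*hb2
  have hyΔ : y*Δ = α*b - γ*a := by linear_combination y*hΔ + γ*ha2 - α*hb2
  -- radical powers
  have hxrad : x ∈ (Ideal.span {a, b} : Ideal R).radical := by
    rw [hQ, hm]; exact Ideal.subset_span (by simp)
  have hyrad : y ∈ (Ideal.span {a, b} : Ideal R).radical := by
    rw [hQ, hm]; exact Ideal.subset_span (by simp)
  obtain ⟨N, hxNm⟩ := Ideal.mem_radical_iff.mp hxrad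
  obtain ⟨M, hyMm⟩ := Ideal.mem_radical_iff.mp hyrad
  obtain ⟨u₁, u₂, hxN⟩ := Ideal.mem_span_pair.mp hxNm
  obtain ⟨v₁, v₂, hyM⟩ := Ideal.mem_span_pair.mp hyMm
  -- a and b nonzero
  have hane : a ≠ 0 := by
    rintro rfl
    apply rad_principal_ne hdim b
    have hsp : Ideal.span {(0:R), b} = Ideal.span {b} := by
      apply le_antisymm
      · rw [Ideal.span_le]; rintro z (rfl | rfl)
        · simp
        · exact Ideal.mem_span_singleton_self _
      · exact Ideal.span_mono (by simp)
    rw [← hsp, hQ]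
  have hΔne : Δ ≠ 0 := by
    intro h0
    have hδa : δ*a = β*b := by linear_combination x*h0 - hxΔ
    have hγa : γ*a = α*b := by linear_combination hyΔ - y*h0
    have hdvd1 : a ∣ α * x^N := ⟨u₁*α + u₂*γ, by linear_combination -α*hxN - u₂*hγa⟩
    have hdvd2 : a ∣ α * y^M := ⟨v₁*α + v₂*γ, by linear_combination -α*hyM - v₂*hγa⟩
    have hdvd3 : a ∣ β * x^N := ⟨u₁*β + u₂*δ, by linear_combination -β*hxN - u₂*hδa⟩
    have hdvd4 : a ∣ β * y^M := ⟨v₁*β + v₂*δ, by linear_combination -β*hyM - v₂*hδa⟩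
    obtain ⟨s₁, hs₁⟩ := lemE hdim hm a α N M hdvd1 hdvd2
    obtain ⟨s₂, hs₂⟩ := lemE hdim hm a β N M hdvd3 hdvd4
    have hfac : a * (1 - s₁*x - s₂*y) = 0 := by linear_combination ha2 + x*hs₁ + y*hs₂
    rcases mul_eq_zero.mp hfac with h | h
    · exact hane h
    · have h1 : (1:R) ∈ maximalIdeal R := by
        rw [hm, Ideal.mem_span_pair]
        exact ⟨s₁, s₂, by linear_combination -h⟩
      exact (maximalIdeal.isMaximal R).ne_top ((Ideal.eq_top_iff_one _).mpr h1)
  -- membership criteria for I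
  have hImem : ∀ g : R, g*x ∈ Ideal.span {a, b} → g*y ∈ Ideal.span {a, b} → g ∈ I := by
    intro g hgx hgy
    rw [hI]
    rw [Submodule.mem_colon]
    intro p hp
    rw [hm, SetLike.mem_coe, Ideal.mem_span_pair] at hp
    obtain ⟨c, d, hcd⟩ := hp
    have : g • p = c*(g*x) + d*(g*y) := by rw [smul_eq_mul, ← hcd]; ring
    rw [this]
    exact Submodule.add_mem _ (Ideal.mul_mem_left _ c hgx) (Ideal.mul_mem_left _ d hgy)
  have hIout : ∀ g, g ∈ I → g*x ∈ Ideal.span {a, b} ∧ g*y ∈ Ideal.span {a, b} := by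
    intro g hg
    rw [hI] at hg
    constructor
    · have := Submodule.mem_colon.mp hg x (by rw [hm]; exact Ideal.subset_span (by simp))
      rwa [smul_eq_mul] at this
    · have := Submodule.mem_colon.mp hg y (by rw [hm]; exact Ideal.subset_span (by simp))
      rwa [smul_eq_mul] at this
  have hΔI : Δ ∈ I := by
    apply hImem
    · rw [Ideal.mem_span_pair]
      exact ⟨δ, -β, by linear_combination -hxΔ⟩
    · rw [Ideal.mem_span_pair]
      exact ⟨-γ, α, by linear_combination -hyΔ⟩
  -- KEY: every element of I is of the form Δ*t + a*e + b*e'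
  have key : ∀ f, f ∈ I → ∃ t e e', f = Δ*t + a*e + b*e' := by
    intro f hf
    obtain ⟨hfxQ, hfyQ⟩ := hIout f hf
    obtain ⟨p₁, q₁, hfx⟩ := Ideal.mem_span_pair.mp hfxQ
    obtain ⟨p₂, q₂, hfy⟩ := Ideal.mem_span_pair.mp hfyQ
    obtain ⟨w₁, hW1, hW2⟩ := koszul hdim hm (f - p₁*α - q₁*γ) (-(p₁*β + q₁*δ))
      (by linear_combination -hfx + p₁*ha2 + q₁*hb2)
    obtain ⟨w₂, hW3, hW4⟩ := koszul hdim hm (p₂*α + q₂*γ) (p₂*β + q₂*δ - f)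
      (by linear_combination hfy - p₂*ha2 - q₂*hb2)
    have hD1 : Δ*p₁ = δ*f - b*w₁ := by
      linear_combination p₁*hΔ - δ*hW1 + γ*hW2 + w₁*hb2
    have hD2 : Δ*q₁ = w₁*a - β*f := by
      linear_combination q₁*hΔ - α*hW2 - w₁*ha2 + β*hW1
    have hD3 : Δ*p₂ = w₂*b - γ*f := by
      linear_combination p₂*hΔ + δ*hW3 - γ*hW4 - w₂*hb2
    have hD4 : Δ*q₂ = α*f - w₂*a := by
      linear_combination q₂*hΔ + α*hW4 - β*hW3 + w₂*ha2
    have hbF : Δ ∣ (f - w₁*y - w₂*x) * b :=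
      ⟨y*p₁ - x*p₂, by linear_combination -y*hD1 + x*hD3 + f*hb2⟩
    have haF : Δ ∣ (f - w₁*y - w₂*x) * a :=
      ⟨x*q₂ - y*q₁, by linear_combination y*hD2 - x*hD4 + f*ha2⟩
    have hFx : Δ ∣ (f - w₁*y - w₂*x) * x^N := by
      have hrw : (f - w₁*y - w₂*x) * x^N
          = u₁*((f - w₁*y - w₂*x)*a) + u₂*((f - w₁*y - w₂*x)*b) := by
        linear_combination -(f - w₁*y - w₂*x)*hxN
      rw [hrw]
      exact dvd_add (Dvd.dvd.mul_left haF u₁) (Dvd.dvd.mul_left hbF u₂)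
    have hFy : Δ ∣ (f - w₁*y - w₂*x) * y^M := by
      have hrw : (f - w₁*y - w₂*x) * y^M
          = v₁*((f - w₁*y - w₂*x)*a) + v₂*((f - w₁*y - w₂*x)*b) := by
        linear_combination -(f - w₁*y - w₂*x)*hyM
      rw [hrw]
      exact dvd_add (Dvd.dvd.mul_left haF v₁) (Dvd.dvd.mul_left hbF v₂)
    obtain ⟨t, ht'⟩ := lemE hdim hm Δ (f - w₁*y - w₂*x) N M hFx hFy
    have ht : f - w₁*y - w₂*x = Δ*t := ht'
    have hu : Δ ∣ α*w₁ - β*w₂ := by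
      apply lemE hdim hm Δ (α*w₁ - β*w₂) 1 1 <;> rw [pow_one]
      · exact ⟨q₁ + t*β, by linear_combination -hD2 + β*ht - w₁*ha2⟩
      · exact ⟨q₂ - t*α, by linear_combination -hD4 - α*ht + w₂*ha2⟩
    have hv : Δ ∣ δ*w₂ - γ*w₁ := by
      apply lemE hdim hm Δ (δ*w₂ - γ*w₁) 1 1 <;> rw [pow_one]
      · exact ⟨p₁ - t*δ, by linear_combination -hD1 - δ*ht + w₁*hb2⟩
      · exact ⟨p₂ + t*γ, by linear_combination -hD3 + γ*ht - w₂*hb2⟩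
    obtain ⟨e₁, he₁'⟩ := hu
    obtain ⟨e₂, he₂'⟩ := hv
    have he₁ : α*w₁ - β*w₂ = Δ*e₁ := he₁'
    have he₂ : δ*w₂ - γ*w₁ = Δ*e₂ := he₂'
    have hw₁c : w₁ = δ*e₁ + β*e₂ := by
      apply mul_left_cancel₀ hΔne
      linear_combination δ*he₁ + β*he₂ + w₁*hΔ
    have hw₂c : w₂ = γ*e₁ + α*e₂ := by
      apply mul_left_cancel₀ hΔne
      linear_combination γ*he₁ + α*he₂ + w₂*hΔ
    exact ⟨t, e₂, e₁, by
      linear_combination ht + y*hw₁c + x*hw₂c - e₁*hb2 - e₂*ha2⟩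
  -- claim 3 : Δ*Δ ∈ Q*I
  obtain ⟨c₂, hc₂⟩ : ∃ c₂ : R, c₂ = a₁*b₃ - a₃*b₁ := ⟨_, rfl⟩
  obtain ⟨c₃, hc₃⟩ : ∃ c₃ : R, c₃ = a₂*b₃ - a₃*b₂ := ⟨_, rfl⟩
  obtain ⟨A, hA⟩ : ∃ A : R, A = c₂*y*δ - c₃*y*γ := ⟨_, rfl⟩
  obtain ⟨B, hB⟩ : ∃ B : R, B = c₃*y*α - c₂*y*β := ⟨_, rfl⟩
  have hAI : A ∈ I := by
    apply hImem
    · rw [Ideal.mem_span_pair]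
      refine ⟨-(b₂*b₃*y + b₁*b₃*x), a₃*b₂*y + a₁*b₃*x, ?_⟩
      subst hA hc₂ hc₃ hα hβ hγ hδ
      linear_combination ((y*b₂*b₃) + x*b₁*b₃)*ha + (-(y*a₃*b₂) - x*a₁*b₃)*hb
    · rw [Ideal.mem_span_pair]
      refine ⟨b₂*b₂*y - b₁*b₃*y + b₁*b₂*x, -(a₂*b₂*y) + a₁*b₃*y - a₁*b₂*x, ?_⟩
      subst hA hc₂ hc₃ hα hβ hγ hδ
      linear_combination (-(y*b₂*b₂) + y*b₁*b₃ - x*b₁*b₂)*ha + ((y*a₂*b₂) - y*a₁*b₃ + x*a₁*b₂)*hb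
  have hBI : B ∈ I := by
    apply hImem
    · rw [Ideal.mem_span_pair]
      refine ⟨a₂*b₃*y + a₃*b₁*x, -(a₂*a₃*y) - a₁*a₃*x, ?_⟩
      subst hB hc₂ hc₃ hα hβ hγ hδ
      linear_combination (-(y*a₂*b₃) - x*a₃*b₁)*ha + ((y*a₂*a₃) + x*a₁*a₃)*hb
    · rw [Ideal.mem_span_pair]
      refine ⟨a₃*b₁*y - a₂*b₂*y - a₂*b₁*x, a₂*a₂*y - a₁*a₃*y + a₁*a₂*x, ?_⟩
      subst hB hc₂ hc₃ hα hβ hγ hδ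
      linear_combination (-(y*a₃*b₁) + y*a₂*b₂ + x*a₂*b₁)*ha + (-(y*a₂*a₂) + y*a₁*a₃ - x*a₁*a₂)*hb
  have hsq : Δ*Δ ∈ Ideal.span {a, b} * I := by
    have hid : Δ*Δ = a*A + b*B := by
      subst hA hB hc₂ hc₃ hΔ hα hβ hγ hδ
      linear_combination (y*y*a₃*b₂*b₂ - y*y*a₃*b₁*b₃ - y*y*a₂*b₂*b₃ + y*y*a₁*b₃*b₃ + x*y*a₃*b₁*b₂ - x*y*a₂*b₁*b₃)*ha + (y*y*a₃*a₃*b₁ - y*y*a₂*a₃*b₂ + y*y*a₂*a₂*b₃ - y*y*a₁*a₃*b₃ - x*y*a₁*a₃*b₂ + x*y*a₁*a₂*b₃)*hb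
    rw [hid]
    exact Submodule.add_mem _ (Ideal.mul_mem_mul haQ hAI) (Ideal.mul_mem_mul hbQ hBI)
  -- assemble
  apply le_antisymm
  · rw [pow_two]
    rw [Ideal.mul_le]
    intro f hf g hg
    obtain ⟨t, e, e', hfeq⟩ := key f hf
    obtain ⟨t', d, d', hgeq⟩ := key g hg
    have hexp : f*g = (t*t')*(Δ*Δ) + (t*d)*(a*Δ) + (t*d')*(b*Δ) + e*(a*g) + e'*(b*g) := by
      rw [hfeq, hgeq]; ring
    rw [hexp]
    have m1 : a*Δ ∈ Ideal.span {a, b} * I := Ideal.mul_mem_mul haQ hΔI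
    have m2 : b*Δ ∈ Ideal.span {a, b} * I := Ideal.mul_mem_mul hbQ hΔI
    have m3 : a*g ∈ Ideal.span {a, b} * I := Ideal.mul_mem_mul haQ hg
    have m4 : b*g ∈ Ideal.span {a, b} * I := Ideal.mul_mem_mul hbQ hg
    exact Submodule.add_mem _ (Submodule.add_mem _ (Submodule.add_mem _ (Submodule.add_mem _
      (Ideal.mul_mem_left _ _ hsq) (Ideal.mul_mem_left _ _ m1)) (Ideal.mul_mem_left _ _ m2))
      (Ideal.mul_mem_left _ _ m3)) (Ideal.mul_mem_left _ _ m4)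
  · have hQI : Ideal.span {a, b} ≤ I := by
      intro q hq
      rw [hI, Submodule.mem_colon]
      intro p hp
      rw [smul_eq_mul]
      exact Ideal.mul_mem_right p _ hq
    rw [pow_two]
    exact Ideal.mul_mono hQI le_rfl
end
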